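/- Let x, y be primitive cyclically reduced words generating distinct cyclic subgroups with ⟨x⟩ ∩ ⟨y⟩ = {1}, and suppose |x| ≤ |y|. If c is a common prefix of x^n and y^n and y contains no subword of the form x'^τ for any cyclic shift x' of x (where τ ≥ 2 is fixed), then |c| < min{2|y|, (τ+1)|x|}. -/

import Mathlib

/-- `n`-fold concatenation of a word with itself. -/
def wpow {α : Type*} (w : List α) (n : ℕ) : List α := (List.replicate n w).flatten

/-- A word is primitive if it is not a proper power. -/
def PrimitiveWord {α : Type*} (w : List α) : Prop :=
  ∀ (v : List α) (k : ℕ), w = wpow v k → k = 1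

/-- A word is reduced if no adjacent pair of letters cancels. -/
def Reduced {α : Type*} (w : List (α × Bool)) : Prop :=
  List.Chain' (fun a b => ¬(b.1 = a.1 ∧ b.2 = !a.2)) w

/-- A word is cyclically reduced if every cyclic shift of it is reduced. -/
def CycReduced {α : Type*} (w : List (α × Bool)) : Prop :=
  ∀ u v : List (α × Bool), w = u ++ v → Reduced (v ++ u)

lemma wpow_zero {α : Type*} (w : List α) : wpow w 0 = [] := rfl

lemma wpow_succ {α : Type*} (w : List α) (n : ℕ) : wpow w (n + 1) = w ++ wpow w n := by
  simp [wpow, List.replicate_succ]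

lemma wpow_one {α : Type*} (w : List α) : wpow w 1 = w := by
  simp [wpow_succ, wpow_zero]

lemma wpow_length {α : Type*} (w : List α) (n : ℕ) :
    (wpow w n).length = n * w.length := by
  induction n with
  | zero => simp [wpow_zero]
  | succ k ih => simp [wpow_succ, ih, Nat.succ_mul]; ring

lemma wpow_add {α : Type*} (w : List α) (a b : ℕ) :
    wpow w (a + b) = wpow w a ++ wpow w b := by
  induction a with
  | zero => simp [wpow_zero]
  | succ k ih =>
      have : k + 1 + b = (k + b) + 1 := by ring
      rw [this, wpow_succ, ih, wpow_succ, List.append_assoc]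

lemma take_eq_of_prefix {α : Type*} {a b : List α} (h : a <+: b) {k : ℕ}
    (hk : k ≤ a.length) : b.take k = a.take k := by
  obtain ⟨t, rfl⟩ := h
  exact List.take_append_of_le_length hk

/-- if two words commute, they are powers of a common word -/
lemma comm_pow_aux {α : Type*} : ∀ (N : ℕ) (x y : List α),
    x.length + y.length ≤ N → x ++ y = y ++ x →
    ∃ (w : List α) (i j : ℕ), x = wpow w i ∧ y = wpow w j := by
  intro N
  induction N with
  | zero =>
      intro x y hN _
      have hx : x = [] := List.eq_nil_of_length_eq_zero (by omega)
      have hy : y = [] := List.eq_nil_of_length_eq_zero (by omega)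
      exact ⟨[], 0, 0, by simp [hx, wpow_zero], by simp [hy, wpow_zero]⟩
  | succ N ih =>
      intro x y hN h
      rcases eq_or_ne x [] with hx | hx
      · exact ⟨y, 0, 1, by simp [hx, wpow_zero], by simp [wpow_one]⟩
      rcases eq_or_ne y [] with hy | hy
      · exact ⟨x, 1, 0, by simp [wpow_one], by simp [hy, wpow_zero]⟩
      have hx1 : 1 ≤ x.length := List.length_pos_of_ne_nil hx
      have hy1 : 1 ≤ y.length := List.length_pos_of_ne_nil hy
      rcases le_total x.length y.length with hle | hle
      · -- x is a prefix of y
        have hpre : x <+: y := by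
          have h1 : y.take x.length = x := by
            have : (y ++ x).take x.length = x := by
              rw [← h]; simpa using (List.take_left x y)
            rwa [List.take_append_of_le_length hle] at this
          exact h1 ▸ List.take_prefix _ _
        obtain ⟨z, hz⟩ := hpre
        have hz' : x ++ z = z ++ x := by
          have : x ++ (x ++ z) = x ++ (z ++ x) := by
            calc x ++ (x ++ z) = x ++ y := by rw [hz]
            _ = y ++ x := h
            _ = (x ++ z) ++ x := by rw [hz]
            _ = x ++ (z ++ x) := by rw [List.append_assoc]
          exact List.append_cancel_left this
        have hzlen : z.length = y.length - x.length := by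
          have := congrArg List.length hz; simp at this; omega
        obtain ⟨w, i, j, hwx, hwz⟩ := ih x z (by omega) hz'
        exact ⟨w, i, i + j, hwx, by rw [← hz, hwx, hwz, ← wpow_add]⟩
      · -- y is a prefix of x
        have hpre : y <+: x := by
          have h1 : x.take y.length = y := by
            have : (x ++ y).take y.length = y := by
              rw [h]; simpa using (List.take_left y x)
            rwa [List.take_append_of_le_length hle] at this
          exact h1 ▸ List.take_prefix _ _
        obtain ⟨z, hz⟩ := hpre
        have hz' : y ++ z = z ++ y := by
          have : y ++ (y ++ z) = y ++ (z ++ y) := by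
            calc y ++ (y ++ z) = y ++ x := by rw [hz]
            _ = x ++ y := h.symm
            _ = (y ++ z) ++ y := by rw [hz]
            _ = y ++ (z ++ y) := by rw [List.append_assoc]
          exact List.append_cancel_left this
        have hzlen : z.length = x.length - y.length := by
          have := congrArg List.length hz; simp at this; omega
        obtain ⟨w, i, j, hwy, hwz⟩ := ih y z (by omega) hz'
        exact ⟨w, i + j, i, by rw [← hz, hwy, hwz, ← wpow_add], hwy⟩

/-- a sufficiently long common prefix of powers forces commutation -/
lemma prefix_comm {α : Type*} {x y c : List α} {n : ℕ}
    (hx : x ≠ []) (hy : y ≠ [])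
    (hcx : c <+: wpow x n) (hcy : c <+: wpow y n)
    (hlen : x.length + y.length ≤ c.length) :
    x ++ y = y ++ x := by
  have hx1 : 1 ≤ x.length := List.length_pos_of_ne_nil hx
  have hy1 : 1 ≤ y.length := List.length_pos_of_ne_nil hy
  have hnx : x.length + y.length ≤ n * x.length := by
    have := hcx.length_le; rw [wpow_length] at this; omega
  have hny : x.length + y.length ≤ n * y.length := by
    have := hcy.length_le; rw [wpow_length] at this; omega
  have hn1 : 1 ≤ n := by nlinarith
  -- key: (wpow x n).take (x.length + y.length) = x ++ y
  have keyx : (wpow x n).take (x.length + y.length) = x ++ y := by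
    have hsplit : wpow x n = x ++ wpow x (n - 1) := by
      conv_lhs => rw [show n = 1 + (n - 1) by omega]
      rw [wpow_add, wpow_one]
    have hylen : y.length ≤ (n - 1) * x.length := by
      have : (n - 1) * x.length = n * x.length - x.length := by
        cases n with
        | zero => omega
        | succ m => simp [Nat.succ_mul]
      omega
    have hy' : (wpow x (n - 1)).take y.length = y := by
      have hp1 : wpow x (n - 1) <+: wpow x n := by
        refine ⟨wpow x 1, ?_⟩; rw [← wpow_add]
        congr 1; omega
      have e1 : (wpow x (n - 1)).take y.length = (wpow x n).take y.length :=
        (take_eq_of_prefix hp1 (by rw [wpow_length]; omega)).symm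
      have e2 : (wpow x n).take y.length = c.take y.length :=
        take_eq_of_prefix hcx (by omega)
      have e3 : c.take y.length = (wpow y n).take y.length :=
        (take_eq_of_prefix hcy (by omega)).symm
      have e4 : (wpow y n).take y.length = y := by
        have : wpow y n = y ++ wpow y (n - 1) := by
          conv_lhs => rw [show n = 1 + (n - 1) by omega]
          rw [wpow_add, wpow_one]
        rw [this]; exact List.take_left
      rw [e1, e2, e3, e4]
    rw [hsplit]
    rw [show x.length + y.length = x.length + y.length from rfl]
    rw [List.take_append]  -- hope: (l₁ ++ l₂).take (l₁.length + n) = l₁ ++ l₂.take n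
    rw [List.take_of_length_le (by omega), Nat.add_sub_cancel_left]
    rw [hy']
  have keyy : (wpow y n).take (x.length + y.length) = y ++ x := by
    have hsplit : wpow y n = y ++ wpow y (n - 1) := by
      conv_lhs => rw [show n = 1 + (n - 1) by omega]
      rw [wpow_add, wpow_one]
    have hxlen : x.length ≤ (n - 1) * y.length := by
      have : (n - 1) * y.length = n * y.length - y.length := by
        cases n with
        | zero => omega
        | succ m => simp [Nat.succ_mul]
      omega
    have hx' : (wpow y (n - 1)).take x.length = x := by
      have hp1 : wpow y (n - 1) <+: wpow y n := by
        refine ⟨wpow y 1, ?_⟩; rw [← wpow_add]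
        congr 1; omega
      have e1 : (wpow y (n - 1)).take x.length = (wpow y n).take x.length :=
        (take_eq_of_prefix hp1 (by rw [wpow_length]; omega)).symm
      have e2 : (wpow y n).take x.length = c.take x.length :=
        take_eq_of_prefix hcy (by omega)
      have e3 : c.take x.length = (wpow x n).take x.length :=
        (take_eq_of_prefix hcx (by omega)).symm
      have e4 : (wpow x n).take x.length = x := by
        have : wpow x n = x ++ wpow x (n - 1) := by
          conv_lhs => rw [show n = 1 + (n - 1) by omega]
          rw [wpow_add, wpow_one]
        rw [this]; exact List.take_left
      rw [e1, e2, e3, e4]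
    rw [hsplit]
    rw [show x.length + y.length = y.length + x.length from by ring]
    rw [List.take_append]
    rw [List.take_of_length_le (by omega), Nat.add_sub_cancel_left]
    rw [hx']
  have e5 : (wpow x n).take (x.length + y.length) = c.take (x.length + y.length) :=
    take_eq_of_prefix hcx hlen
  have e6 : c.take (x.length + y.length) = (wpow y n).take (x.length + y.length) :=
    (take_eq_of_prefix hcy hlen).symm
  rw [keyx, keyy] at *
  rw [e6] at e5
  exact e5

/-- Common-prefix bound for powers of `x` and `y` when `y` contains no `τ`-th
power of a cyclic shift of `x`. -/
theorem common_prefix_bound {α : Type*} (x y c : List (α × Bool)) (τ n : ℕ)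
    (hτ : 2 ≤ τ)
    (hx : PrimitiveWord x) (hy : PrimitiveWord y)
    (hcx : CycReduced x) (hcy : CycReduced y)
    (hdist : Subgroup.zpowers (FreeGroup.mk x) ≠ Subgroup.zpowers (FreeGroup.mk y))
    (hint : Subgroup.zpowers (FreeGroup.mk x) ⊓ Subgroup.zpowers (FreeGroup.mk y) = ⊥)
    (hlen : x.length ≤ y.length)
    (hpx : c <+: wpow x n) (hpy : c <+: wpow y n)
    (hno : ∀ p q : List (α × Bool), x = p ++ q → ¬ (wpow (q ++ p) τ <:+: y)) :
    c.length < min (2 * y.length) ((τ + 1) * x.length) := by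
  have hxne : x ≠ [] := by
    intro hxe
    simpa using hx [] 0 (by simp [hxe, wpow_zero])
  have hyne : y ≠ [] := by
    intro hye
    simpa using hy [] 0 (by simp [hye, wpow_zero])
  have hx1 : 1 ≤ x.length := List.length_pos_of_ne_nil hxne
  have hy1 : 1 ≤ y.length := List.length_pos_of_ne_nil hyne
  -- commuting case leads to contradiction
  have hcomm : ¬ (x.length + y.length ≤ c.length) := by
    intro hc
    have hxy : x ++ y = y ++ x := prefix_comm hxne hyne hpx hpy hc
    obtain ⟨w, i, j, hwx, hwy⟩ := comm_pow_aux (x.length + y.length) x y le_rfl hxy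
    have hi : i = 1 := hx w i hwx
    have hj : j = 1 := hy w j hwy
    have : x = y := by rw [hwx, hwy, hi, hj]
    exact hdist (by rw [this])
  by_contra hcon
  rw [not_lt, min_le_iff] at hcon
  rcases hcon with h1 | h2
  · exact hcomm (by omega)
  · -- (τ+1)*x.length ≤ c.length
    rcases le_or_gt y.length (τ * x.length) with hyx | hyx
    · exact hcomm (by nlinarith)
    · -- τ * x.length < y.length : wpow x τ is a prefix of y
      have hcn : c.length ≤ n * x.length := by
        have := hpx.length_le; rwa [wpow_length] at this
      have hτn : τ ≤ n := by nlinarith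
      have hn1 : 1 ≤ n := by omega
      have hwτ : (wpow x n).take (τ * x.length) = wpow x τ := by
        have hsplit : wpow x n = wpow x τ ++ wpow x (n - τ) := by
          rw [← wpow_add]; congr 1; omega
        rw [hsplit, List.take_append_of_le_length (by rw [wpow_length])]
        rw [List.take_of_length_le (by rw [wpow_length])]
      have hτc : τ * x.length ≤ c.length := by nlinarith
      have e1 : (wpow x n).take (τ * x.length) = c.take (τ * x.length) :=
        take_eq_of_prefix hpx hτc
      have e2 : c.take (τ * x.length) = (wpow y n).take (τ * x.length) :=
        (take_eq_of_prefix hpy hτc).symm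
      have e3 : (wpow y n).take (τ * x.length) = y.take (τ * x.length) := by
        have hsplit : wpow y n = y ++ wpow y (n - 1) := by
          conv_lhs => rw [show n = 1 + (n - 1) by omega]
          rw [wpow_add, wpow_one]
        rw [hsplit, List.take_append_of_le_length (by omega)]
      have hpre : wpow x τ <+: y := by
        rw [← hwτ, e1, e2, e3]; exact List.take_prefix _ _
      refine hno [] x rfl ?_
      rw [List.append_nil]
      exact hpre.isInfix
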